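/- If ω₀ is a Hermitian metric on a compact complex manifold M of dimension n satisfying both ∂∂̄ω₀ = 0 and ∂∂̄(ω₀²) = 0, then ∂∂̄(ω₀^k) = 0 for all k ≥ 1. Moreover, these two conditions are preserved along the Chern–Ricci flow. -/

import Mathlib

/-!
STATEMENT 13: If a Hermitian metric ω₀ on a compact complex manifold satisfies
∂∂̄ω₀ = 0 and ∂∂̄(ω₀²) = 0, then ∂∂̄(ω₀^k) = 0 for all k ≥ 1; moreover both
conditions are preserved along the Chern–Ricci flow.

Abstract model: `A` is the (commutative, normed) algebra of real (p,p)-forms under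
wedge product, `ddbar` the operator ∂∂̄, and `cross α β = ∂α∧∂̄β + ∂̄α∧∂β` the
cross term, so that `hLeib` is the Leibniz identity
∂∂̄(α∧β) = ∂∂̄α∧β + α∧∂∂̄β + ∂α∧∂̄β + ∂̄α∧∂β; `cross` is symmetric and a
derivation in each entry (`hsymm`, `hder`).  `Ric` is the Chern–Ricci form;
`hRicClosed` records that Ric(g) is d-closed, so ∂∂̄Ric(g) = 0 and
∂Ric(g)∧∂̄α + ∂̄Ric(g)∧∂α = 0.
-/
theorem stmt13 {A : Type*} [NormedCommRing A] [NormedAlgebra ℝ A]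
    (ddbar : A →L[ℝ] A)
    (cross : A →L[ℝ] A →L[ℝ] A)
    (hLeib : ∀ α β : A, ddbar (α * β) = ddbar α * β + α * ddbar β + cross α β)
    (hsymm : ∀ α β : A, cross α β = cross β α)
    (hder : ∀ α β γ : A, cross α (β * γ) = cross α β * γ + β * cross α γ)
    (Ric : A → A)
    (hRicClosed : ∀ g : A, ddbar (Ric g) = 0 ∧ ∀ α : A, cross (Ric g) α = 0)
    (ω₀ : A)
    (h1 : ddbar ω₀ = 0) (h2 : ddbar (ω₀ ^ 2) = 0) :
    -- ∂∂̄(ω₀^k) = 0 for all k ≥ 1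
    (∀ k : ℕ, 1 ≤ k → ddbar (ω₀ ^ k) = 0) ∧
    -- both conditions are preserved along the Chern–Ricci flow
    (∀ (T : ℝ) (ω : ℝ → A), ω 0 = ω₀ →
      (∀ t ∈ Set.Ico (0:ℝ) T, HasDerivAt ω (-(Ric (ω t))) t) →
      ∀ t ∈ Set.Ico (0:ℝ) T, ddbar (ω t) = 0 ∧ ddbar ((ω t) ^ 2) = 0) := by
  -- cross term vanishes for ω₀
  have hcross0 : cross ω₀ ω₀ = 0 := by
    have := hLeib ω₀ ω₀
    rw [h1, zero_mul, mul_comm, mul_zero, zero_add, zero_add] at this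
    have h2' : ddbar (ω₀ * ω₀) = 0 := by rw [← sq]; exact h2
    rw [h2'] at this; exact this.symm
  -- a general lemma: if ddbar ω = 0 and cross ω ω = 0, all powers are ddbar-closed
  have key : ∀ (ω : A), ddbar ω = 0 → cross ω ω = 0 →
      ∀ k : ℕ, 1 ≤ k → ddbar (ω ^ k) = 0 ∧ cross ω (ω ^ k) = 0 := by
    intro ω hω hc k hk
    induction k with
    | zero => omega
    | succ n ih =>
      rcases Nat.eq_or_lt_of_le hk with h | h
      · simp only [← h, pow_one]; exact ⟨hω, hc⟩
      · have hn : 1 ≤ n := by omega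
        obtain ⟨ih1, ih2⟩ := ih hn
        constructor
        · rw [pow_succ, mul_comm, hLeib, hω, ih1, ih2]; ring
        · rw [pow_succ, mul_comm, hder, hc, ih2]; ring
  refine ⟨fun k hk => (key ω₀ h1 hcross0 k hk).1, ?_⟩
  intro T ω h0 hflow t ht
  obtain ⟨ht0, htT⟩ := ht
  have hsub : ∀ x ∈ Set.Icc (0:ℝ) t, x ∈ Set.Ico (0:ℝ) T :=
    fun x hx => ⟨hx.1, lt_of_le_of_lt hx.2 htT⟩
  -- f := ddbar ∘ ω is constant on [0, t]
  have hfd : ∀ x ∈ Set.Icc (0:ℝ) t, HasDerivAt (fun s => ddbar (ω s)) 0 x := by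
    intro x hx
    have := ddbar.hasFDerivAt.comp_hasDerivAt x (hflow x (hsub x hx))
    simp only [map_neg, (hRicClosed (ω x)).1, neg_zero] at this
    exact this
  have hf : ddbar (ω t) = ddbar (ω 0) := by
    have := constant_of_has_deriv_right_zero
      (f := fun s => ddbar (ω s)) (a := 0) (b := t)
      (fun x hx => (hfd x hx).continuousAt.continuousWithinAt)
      (fun x hx => ((hfd x (Set.Ico_subset_Icc_self hx)).hasDerivWithinAt))
    exact this t ⟨ht0, le_refl t⟩
  have hddbar : ddbar (ω t) = 0 := by rw [hf, h0, h1]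
  -- g := cross (ω s) (ω s) is constant on [0, t]
  have hgd : ∀ x ∈ Set.Icc (0:ℝ) t, HasDerivAt (fun s => cross (ω s) (ω s)) 0 x := by
    intro x hx
    have hωx := hflow x (hsub x hx)
    have hc : HasDerivAt (fun s => cross (ω s)) (cross (-(Ric (ω x)))) x :=
      cross.hasFDerivAt.comp_hasDerivAt x hωx
    have := hc.clm_apply hωx
    simpa [map_neg, ContinuousLinearMap.neg_apply, (hRicClosed (ω x)).2,
      hsymm (ω x)] using this
  have hg : cross (ω t) (ω t) = cross (ω 0) (ω 0) := by
    have := constant_of_has_deriv_right_zero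
      (f := fun s => cross (ω s) (ω s)) (a := 0) (b := t)
      (fun x hx => (hgd x hx).continuousAt.continuousWithinAt)
      (fun x hx => ((hgd x (Set.Ico_subset_Icc_self hx)).hasDerivWithinAt))
    exact this t ⟨ht0, le_refl t⟩
  have hcrosst : cross (ω t) (ω t) = 0 := by rw [hg, h0, hcross0]
  refine ⟨hddbar, ?_⟩
  rw [sq, hLeib, hddbar, hcrosst]; ring
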